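/- Chernoff bound for linear statistics of determinantal processes: let 𝔇 be a determinantal point process with finite-rank self-adjoint kernel K, 0 ≤ K ≤ 1, f a bounded Borel function, and r > 0. Then P(Σ_{x∈𝔇} f(x) ≥ E[Σ_{x∈𝔇} f(x)] + r) ≤ exp(−A*(r)), where A*(r) = sup_{t ≤ ‖f‖_∞^{−1}} (rt − A(t)) and A(t) = (e t²/2)·E[Σ_{x∈𝔇} f(x)²]. -/

import Mathlib

open scoped BigOperators

/-- det ≤ exp(trace - n) for PSD real matrices. -/
lemma det_le_exp_trace_aux {ι : Type*} [Fintype ι] [DecidableEq ι] {P : Matrix ι ι ℝ}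
    (hP : P.PosSemidef) : P.det ≤ Real.exp (P.trace - Fintype.card ι) := by
  have hH := hP.1
  have hdet : P.det = ∏ i, hH.eigenvalues i := by
    simpa using hH.det_eq_prod_eigenvalues
  have htr : P.trace = ∑ i, hH.eigenvalues i := by
    conv_lhs => rw [hH.spectral_theorem, Unitary.conjStarAlgAut_apply]
    rw [Matrix.trace_mul_cycle, Unitary.coe_star_mul_self, Matrix.one_mul]
    simp [Matrix.trace, Matrix.diag]
  rw [hdet, htr]
  calc ∏ i, hH.eigenvalues i ≤ ∏ i, Real.exp (hH.eigenvalues i - 1) := by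
        refine Finset.prod_le_prod (fun i _ => hP.eigenvalues_nonneg i) (fun i _ => ?_)
        have := Real.add_one_le_exp (hH.eigenvalues i - 1)
        linarith
    _ = Real.exp (∑ i, (hH.eigenvalues i - 1)) := by rw [Real.exp_sum]
    _ = Real.exp (∑ i, hH.eigenvalues i - Fintype.card ι) := by
        rw [Finset.sum_sub_distrib]; simp [Finset.card_univ]

/-- quadratic exp bound -/
lemma exp_quad_aux {x : ℝ} (hx : |x| ≤ 1) :
    Real.exp x - 1 ≤ x + Real.exp 1 / 2 * x ^ 2 := by
  have h := Real.exp_bound hx (n := 2) (by norm_num)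
  have h2 : (∑ m ∈ Finset.range 2, x ^ m / m.factorial) = 1 + x := by
    simp [Finset.sum_range_succ]
  rw [h2] at h
  have h3 := (abs_sub_le_iff.mp h).1
  have h4 : ((Nat.succ 2 : ℕ) : ℝ) / ((Nat.factorial 2 : ℕ) * (2:ℕ)) = 3/4 := by
    norm_num [Nat.factorial]
  rw [h4] at h3
  have he : (2 : ℝ) ≤ Real.exp 1 := by
    have := Real.add_one_le_exp 1; linarith
  have habs : |x| ^ 2 = x ^ 2 := sq_abs x
  nlinarith [sq_nonneg x]

/-- Chernoff bound for linear statistics of a determinantal point process with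
finite-rank self-adjoint kernel `0 ≤ K ≤ 1` (modelled on a finite ground set, the
process being a probability weight on subsets with determinantal Laplace functional):
`P(Σ f ≥ E[Σ f] + r) ≤ exp(-A*(r))` where
`A*(r) = sup_{t ≤ ‖f‖_∞⁻¹} (r t - A(t))` and `A(t) = (e t²/2)·E[Σ f²]`. -/
theorem det_process_chernoff {ι : Type*} [Fintype ι] [DecidableEq ι]
    (K : Matrix ι ι ℝ) (hsym : K.IsSymm) (hK0 : K.PosSemidef)
    (hK1 : ((1 : Matrix ι ι ℝ) - K).PosSemidef)
    (μ : Finset ι → ℝ) (hμ0 : ∀ S, 0 ≤ μ S) (hμ1 : ∑ S : Finset ι, μ S = 1)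
    (hLaplace : ∀ g : ι → ℝ,
      ∑ S : Finset ι, μ S * Real.exp (∑ x ∈ S, g x)
        = ((1 : Matrix ι ι ℝ)
            + Matrix.diagonal (fun i => Real.exp (g i) - 1) * K).det)
    (f : ι → ℝ) (r : ℝ) (hr : 0 < r) :
    ∑ S ∈ Finset.univ.filter
        (fun S : Finset ι =>
          (∑ S' : Finset ι, μ S' * ∑ x ∈ S', f x) + r ≤ ∑ x ∈ S, f x),
        μ S
      ≤ Real.exp (-(sSup {y : ℝ | ∃ t : ℝ, t ≤ (⨆ i, |f i|)⁻¹ ∧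
          y = r * t
            - Real.exp 1 * t ^ 2 / 2
                * (∑ S' : Finset ι, μ S' * ∑ x ∈ S', (f x) ^ 2)})) := by
  classical
  set m : ℝ := ∑ S' : Finset ι, μ S' * ∑ x ∈ S', f x with hm
  set q : ℝ := ∑ S' : Finset ι, μ S' * ∑ x ∈ S', (f x) ^ 2 with hq
  set L : ℝ := ∑ S ∈ Finset.univ.filter
      (fun S : Finset ι => m + r ≤ ∑ x ∈ S, f x), μ S with hLdef
  -- basic facts
  have hq0 : 0 ≤ q := by
    rw [hq]
    exact Finset.sum_nonneg fun S _ => mul_nonneg (hμ0 S)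
      (Finset.sum_nonneg fun x _ => sq_nonneg _)
  have hL0 : 0 ≤ L := Finset.sum_nonneg fun S _ => hμ0 S
  have hL1 : L ≤ 1 := by
    rw [hLdef, ← hμ1]
    exact Finset.sum_le_sum_of_subset_of_nonneg (Finset.filter_subset _ _)
      (fun S _ _ => hμ0 S)
  -- diagonal entries of K
  have hdiagK : ∀ i : ι,
      (∑ S ∈ Finset.univ.filter (fun S : Finset ι => i ∈ S), μ S) = K i i := by
    intro i
    have h := hLaplace (fun j => if j = i then Real.log 2 else 0)
    have hlhs : ∑ S : Finset ι,
        μ S * Real.exp (∑ x ∈ S, if x = i then Real.log 2 else 0)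
        = 1 + ∑ S ∈ Finset.univ.filter (fun S : Finset ι => i ∈ S), μ S := by
      have : ∀ S : Finset ι,
          μ S * Real.exp (∑ x ∈ S, if x = i then Real.log 2 else 0)
            = μ S + (if i ∈ S then μ S else 0) := by
        intro S
        rw [Finset.sum_ite_eq' S i (fun _ => Real.log 2)]
        by_cases hiS : i ∈ S
        · simp only [hiS, if_true]
          rw [Real.exp_log (by norm_num)]
          ring
        · simp [hiS]
      rw [Finset.sum_congr rfl fun S _ => this S, Finset.sum_add_distrib, hμ1,
        Finset.sum_ite, Finset.sum_const_zero, add_zero]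
    have hrhs : ((1 : Matrix ι ι ℝ)
        + Matrix.diagonal (fun j => Real.exp (if j = i then Real.log 2 else 0) - 1) * K).det
        = 1 + K i i := by
      have hfun : (fun j => Real.exp (if j = i then Real.log 2 else 0) - 1)
          = fun j => if j = i then (1 : ℝ) else 0 := by
        funext j
        by_cases hj : j = i
        · simp only [hj, if_pos, Real.exp_log (show (0:ℝ) < 2 by norm_num)]
          norm_num
        · simp [hj]
      have hmat : Matrix.diagonal (fun j => if j = i then (1 : ℝ) else 0) * K
          = Matrix.replicateCol Unit (fun j => if j = i then (1 : ℝ) else 0)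
              * Matrix.replicateRow Unit (K i) := by
        ext a b
        rw [Matrix.diagonal_mul, Matrix.mul_apply]
        simp only [Matrix.replicateCol_apply, Matrix.replicateRow_apply, Finset.univ_unique,
          Finset.sum_singleton]
        by_cases ha : a = i
        · simp [ha]
        · simp [ha]
      rw [hfun, hmat, Matrix.det_one_add_replicateCol_mul_replicateRow]
      congr 1
      simp [dotProduct]
    rw [hlhs, hrhs] at h
    linarith
  have hKd : ∀ i : ι, 0 ≤ K i i := by
    intro i
    rw [← hdiagK i]
    exact Finset.sum_nonneg fun S _ => hμ0 S
  -- first/second moment identities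
  have hmom : ∀ g : ι → ℝ,
      (∑ S : Finset ι, μ S * ∑ x ∈ S, g x) = ∑ i : ι, g i * K i i := by
    intro g
    calc (∑ S : Finset ι, μ S * ∑ x ∈ S, g x)
        = ∑ S : Finset ι, ∑ i : ι, (if i ∈ S then μ S * g i else 0) := by
          refine Finset.sum_congr rfl fun S _ => ?_
          rw [Finset.mul_sum, ← Finset.sum_filter, Finset.filter_univ_mem]
      _ = ∑ i : ι, ∑ S : Finset ι, (if i ∈ S then μ S * g i else 0) :=
          Finset.sum_comm
      _ = ∑ i : ι, g i * K i i := by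
          refine Finset.sum_congr rfl fun i _ => ?_
          rw [← hdiagK i, Finset.sum_filter, Finset.mul_sum]
          refine Finset.sum_congr rfl fun S _ => ?_
          split <;> simp [mul_comm]
  -- sup norm facts
  have hfM : ∀ i : ι, |f i| ≤ ⨆ j, |f j| := fun i =>
    le_ciSup (f := fun j => |f j|) (Set.Finite.bddAbove (Set.finite_range _)) i
  have hMnn : 0 ≤ ⨆ j, |f j| := by
    rcases isEmpty_or_nonempty ι with h | h
    · rw [Real.iSup_of_isEmpty]
    · exact le_trans (abs_nonneg _) (hfM h.some)
  -- key Chernoff estimate for positive t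
  have key : ∀ t : ℝ, 0 < t → t ≤ (⨆ j, |f j|)⁻¹ →
      L ≤ Real.exp (Real.exp 1 * t ^ 2 / 2 * q - r * t) := by
    intro t ht htM
    have hMpos : 0 < ⨆ j, |f j| := by
      rcases lt_or_eq_of_le hMnn with h | h
      · exact h
      · exfalso; rw [← h] at htM; simp at htM; linarith
    have htf : ∀ i : ι, |t * f i| ≤ 1 := by
      intro i
      rw [abs_mul, abs_of_pos ht]
      calc t * |f i| ≤ t * ⨆ j, |f j| :=
            mul_le_mul_of_nonneg_left (hfM i) ht.le
        _ ≤ (⨆ j, |f j|)⁻¹ * ⨆ j, |f j| :=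
            mul_le_mul_of_nonneg_right htM hMnn
        _ = 1 := inv_mul_cancel₀ hMpos.ne'
    have hexp := hLaplace (fun x => t * f x)
    simp only [← Finset.mul_sum] at hexp
    set D : Matrix ι ι ℝ := Matrix.diagonal (fun i => Real.exp (t * f i) - 1) with hD
    set B : Matrix ι ι ℝ := (open scoped MatrixOrder in CFC.sqrt K) with hB
    have hBB : B * B = K := by
      open scoped MatrixOrder in exact CFC.sqrt_mul_sqrt_self K hK0.nonneg
    have hBH : B.IsHermitian := by
      open scoped MatrixOrder in exact (Matrix.nonneg_iff_posSemidef.mp (CFC.sqrt_nonneg K)).1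
    have hdet2 : ((1 : Matrix ι ι ℝ) + D * K).det
        = ((1 : Matrix ι ι ℝ) + B * D * B).det := by
      rw [← hBB, ← Matrix.mul_assoc, Matrix.det_one_add_mul_comm, ← Matrix.mul_assoc]
    have hPSD : ((1 : Matrix ι ι ℝ) + B * D * B).PosSemidef := by
      have hdpos : (Matrix.diagonal fun i => Real.exp (t * f i)).PosSemidef :=
        Matrix.posSemidef_diagonal_iff.mpr fun i => (Real.exp_pos _).le
      have h2 := hdpos.mul_mul_conjTranspose_same B
      rw [hBH.eq] at h2
      have heq : (1 : Matrix ι ι ℝ) + B * D * B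
          = ((1 : Matrix ι ι ℝ) - K)
            + B * (Matrix.diagonal fun i => Real.exp (t * f i)) * B := by
        have hDeq : D = (Matrix.diagonal fun i => Real.exp (t * f i)) - 1 := by
          rw [hD, ← Matrix.diagonal_one, ← Matrix.diagonal_sub]
        rw [hDeq, ← hBB]
        noncomm_ring
      rw [heq]
      exact hK1.add h2
    have hdet3 := det_le_exp_trace_aux hPSD
    have htrace : ((1 : Matrix ι ι ℝ) + B * D * B).trace
        = Fintype.card ι + ∑ i : ι, (Real.exp (t * f i) - 1) * K i i := by
      rw [Matrix.trace_add, Matrix.trace_one, Matrix.trace_mul_cycle, hBB,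
        Matrix.trace_mul_comm]
      congr 1
      simp [Matrix.trace, Matrix.diag, Matrix.diagonal_mul, hD]
    have hsum : ∑ i : ι, (Real.exp (t * f i) - 1) * K i i
        ≤ t * m + Real.exp 1 * t ^ 2 / 2 * q := by
      have h1 : ∑ i : ι, (Real.exp (t * f i) - 1) * K i i
          ≤ ∑ i : ι, (t * f i + Real.exp 1 / 2 * (t * f i) ^ 2) * K i i :=
        Finset.sum_le_sum fun i _ => mul_le_mul_of_nonneg_right
          (by have := exp_quad_aux (htf i); linarith) (hKd i)
      have h2 : ∑ i : ι, (t * f i + Real.exp 1 / 2 * (t * f i) ^ 2) * K i i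
          = t * (∑ i : ι, f i * K i i)
            + Real.exp 1 * t ^ 2 / 2 * (∑ i : ι, (f i) ^ 2 * K i i) := by
        rw [Finset.mul_sum, Finset.mul_sum, ← Finset.sum_add_distrib]
        refine Finset.sum_congr rfl fun i _ => ?_
        ring
      have hm' : m = ∑ i : ι, f i * K i i := by rw [hm]; exact hmom f
      have hq' : q = ∑ i : ι, (f i) ^ 2 * K i i := by
        rw [hq]; exact hmom (fun x => (f x) ^ 2)
      rw [hm', hq']
      linarith
    have hmark : L * Real.exp (t * (m + r))
        ≤ ∑ S : Finset ι, μ S * Real.exp (t * ∑ x ∈ S, f x) := by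
      rw [hLdef, Finset.sum_mul]
      calc ∑ S ∈ Finset.univ.filter (fun S : Finset ι => m + r ≤ ∑ x ∈ S, f x),
            μ S * Real.exp (t * (m + r))
          ≤ ∑ S ∈ Finset.univ.filter (fun S : Finset ι => m + r ≤ ∑ x ∈ S, f x),
            μ S * Real.exp (t * ∑ x ∈ S, f x) := by
            refine Finset.sum_le_sum fun S hS => ?_
            refine mul_le_mul_of_nonneg_left ?_ (hμ0 S)
            exact Real.exp_le_exp.mpr
              (mul_le_mul_of_nonneg_left (Finset.mem_filter.mp hS).2 ht.le)
        _ ≤ ∑ S : Finset ι, μ S * Real.exp (t * ∑ x ∈ S, f x) :=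
            Finset.sum_le_sum_of_subset_of_nonneg (Finset.filter_subset _ _)
              (fun S _ _ => mul_nonneg (hμ0 S) (Real.exp_pos _).le)
    have hchain : L * Real.exp (t * (m + r))
        ≤ Real.exp (t * m + Real.exp 1 * t ^ 2 / 2 * q) := by
      calc L * Real.exp (t * (m + r))
          ≤ ∑ S : Finset ι, μ S * Real.exp (t * ∑ x ∈ S, f x) := hmark
        _ = ((1 : Matrix ι ι ℝ) + D * K).det := hexp
        _ = ((1 : Matrix ι ι ℝ) + B * D * B).det := hdet2
        _ ≤ Real.exp (((1 : Matrix ι ι ℝ) + B * D * B).trace - Fintype.card ι) := hdet3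
        _ = Real.exp (∑ i : ι, (Real.exp (t * f i) - 1) * K i i) := by
            rw [htrace, add_sub_cancel_left]
        _ ≤ Real.exp (t * m + Real.exp 1 * t ^ 2 / 2 * q) :=
            Real.exp_le_exp.mpr hsum
    have hEpos : (0 : ℝ) < Real.exp (t * (m + r)) := Real.exp_pos _
    calc L = L * Real.exp (t * (m + r)) / Real.exp (t * (m + r)) := by
          field_simp
      _ ≤ Real.exp (t * m + Real.exp 1 * t ^ 2 / 2 * q)
            / Real.exp (t * (m + r)) := by gcongr
      _ = Real.exp (Real.exp 1 * t ^ 2 / 2 * q - r * t) := by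
          rw [← Real.exp_sub]; congr 1; ring
  -- conclude via sSup
  rcases eq_or_lt_of_le hL0 with hLz | hLpos
  · rw [← hLz]
    exact (Real.exp_pos _).le
  · have hlog : Real.log L ≤ 0 := Real.log_nonpos hL0 hL1
    have hsup : sSup {y : ℝ | ∃ t : ℝ, t ≤ (⨆ i, |f i|)⁻¹ ∧
        y = r * t - Real.exp 1 * t ^ 2 / 2 * q} ≤ -Real.log L := by
      refine Real.sSup_le ?_ (by linarith)
      rintro y ⟨t, htM, rfl⟩
      rcases le_or_gt t 0 with ht0 | ht0
      · have h1 : r * t ≤ 0 := mul_nonpos_of_nonneg_of_nonpos hr.le ht0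
        have h2 : 0 ≤ Real.exp 1 * t ^ 2 / 2 * q := by positivity
        linarith
      · have hLe := key t ht0 htM
        have := Real.log_le_log hLpos hLe
        rw [Real.log_exp] at this
        linarith
    calc L = Real.exp (Real.log L) := (Real.exp_log hLpos).symm
      _ ≤ Real.exp (-(sSup _)) := Real.exp_le_exp.mpr (by linarith)
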